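/- Fix u ≥ 1, sites a = (−u,−1), b = (u,1), and a fixed x with x < −u. Let (p_n) be any sequence of nonzero reals converging to 0, and let (y_n) be a sequence of reals with y_n > 1 and |x+u|^{p_n} + |y_n+1|^{p_n} = |x−u|^{p_n} + |y_n−1|^{p_n} for every n. Then y_n converges to −x/u (the line point s(x) = −x/u). -/

import Mathlib

open Filter


-- slope lemma
lemma slope0 {t : ℝ} (ht : 0 < t) :
    Tendsto (fun p : ℝ => (t ^ p - 1) / p) (nhdsWithin 0 {0}ᶜ) (nhds (Real.log t)) := by
  have h := (Real.hasStrictDerivAt_const_rpow ht 0).hasDerivAt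
  rw [hasDerivAt_iff_tendsto_slope] at h
  simp only [Real.rpow_zero, one_mul] at h
  refine h.congr' ?_
  filter_upwards [self_mem_nhdsWithin] with q hq
  simp [slope_def_field, div_eq_inv_mul]

-- g_p(y) = (y+1)^p - (y-1)^p monotonicity on Ioi 1
lemma gderiv {q : ℝ} (z : ℝ) (hz : 1 < z) :
    HasDerivAt (fun w : ℝ => (w+1) ^ q - (w-1) ^ q)
      (q * (z+1) ^ (q-1) - q * (z-1) ^ (q-1)) z := by
  have h1 : HasDerivAt (fun w : ℝ => (w+1) ^ q) (q * (z+1) ^ (q-1) * 1) z := by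
    exact (Real.hasDerivAt_rpow_const (Or.inl (by linarith))).comp z
      ((hasDerivAt_id z).add_const 1)
  have h2 : HasDerivAt (fun w : ℝ => (w-1) ^ q) (q * (z-1) ^ (q-1) * 1) z := by
    exact (Real.hasDerivAt_rpow_const (Or.inl (by linarith))).comp z
      ((hasDerivAt_id z).sub_const 1)
  exact (h1.sub h2).congr_deriv (by ring)

lemma gbracket {q : ℝ} (hq1 : q < 1) (z : ℝ) (hz : 1 < z) :
    (z+1) ^ (q-1) < (z-1) ^ (q-1) :=
  Real.rpow_lt_rpow_of_neg (by linarith) (by linarith) (by linarith)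

lemma ganti {q : ℝ} (hq0 : 0 < q) (hq1 : q < 1) :
    StrictAntiOn (fun w : ℝ => (w+1) ^ q - (w-1) ^ q) (Set.Ioi 1) := by
  have : interior (Set.Ioi (1:ℝ)) = Set.Ioi 1 := interior_Ioi
  refine strictAntiOn_of_deriv_neg (convex_Ioi 1) ?_ ?_
  · exact fun z hz => ((gderiv z hz).continuousAt).continuousWithinAt
  · intro z hz
    rw [this] at hz
    rw [(gderiv z hz).deriv]
    have := gbracket hq1 z hz
    nlinarith

lemma gmono {q : ℝ} (hq0 : q < 0) :
    StrictMonoOn (fun w : ℝ => (w+1) ^ q - (w-1) ^ q) (Set.Ioi 1) := by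
  refine strictMonoOn_of_deriv_pos (convex_Ioi 1) ?_ ?_
  · exact fun z hz => ((gderiv z hz).continuousAt).continuousWithinAt
  · intro z hz
    rw [interior_Ioi] at hz
    rw [(gderiv z hz).deriv]
    have := gbracket (by linarith) z hz
    nlinarith

-- combined slope limit for Φ_r(p) = (r+1)^p - (r-1)^p - C^p + A^p
lemma philim {A C r : ℝ} (hA : 0 < A) (hC : 0 < C) (hr : 1 < r) :
    Tendsto (fun p : ℝ => ((r+1) ^ p - (r-1) ^ p - C ^ p + A ^ p) / p)
      (nhdsWithin 0 {0}ᶜ)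
      (nhds (Real.log (r+1) - Real.log (r-1) - Real.log C + Real.log A)) := by
  have h := (((slope0 (t := r+1) (by linarith)).sub
      (slope0 (t := r-1) (by linarith))).sub (slope0 hC)).add (slope0 hA)
  refine h.congr ?_
  intro q
  ring

lemma aux_up {A C : ℝ} (hA : 0 < A) (hC : 0 < C)
    (p : ℕ → ℝ) (hp0 : ∀ n, p n ≠ 0) (hp : Tendsto p atTop (nhds 0))
    (y : ℕ → ℝ) (hy : ∀ n, 1 < y n)
    (heq : ∀ n, (y n + 1) ^ p n - (y n - 1) ^ p n = C ^ p n - A ^ p n)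
    {r : ℝ} (hr : 1 < r)
    (hL : Real.log (r+1) - Real.log (r-1) - Real.log C + Real.log A < 0) :
    ∀ᶠ n in atTop, y n < r := by
  have hp' : Tendsto p atTop (nhdsWithin 0 {0}ᶜ) :=
    tendsto_nhdsWithin_iff.mpr ⟨hp, Eventually.of_forall hp0⟩
  have h1 := (philim hA hC hr).comp hp'
  have h2 : ∀ᶠ n in atTop,
      ((r+1) ^ p n - (r-1) ^ p n - C ^ p n + A ^ p n) / p n < 0 :=
    h1.eventually_lt_const hL
  have h3 : ∀ᶠ n in atTop, |p n| < 1 := by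
    have := hp.eventually (eventually_abs_sub_lt 0 one_pos)
    simpa using this
  filter_upwards [h2, h3] with n hn2 hn3
  have hq1 : p n < 1 := (abs_lt.mp hn3).2
  rcases (hp0 n).lt_or_gt with hneg | hpos
  · -- p n < 0 : numerator positive
    have hΦ : 0 < (r+1) ^ p n - (r-1) ^ p n - C ^ p n + A ^ p n := by
      rcases div_neg_iff.mp hn2 with ⟨h, _⟩ | ⟨_, h⟩ <;> linarith
    exact ((gmono hneg).lt_iff_lt (Set.mem_Ioi.mpr (hy n)) (Set.mem_Ioi.mpr hr)).mp
      (by show _ < _; linarith [heq n])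
  · -- p n > 0 : numerator negative
    have hΦ : (r+1) ^ p n - (r-1) ^ p n - C ^ p n + A ^ p n < 0 := by
      rcases div_neg_iff.mp hn2 with ⟨_, h⟩ | ⟨h, _⟩ <;> linarith
    exact ((ganti hpos hq1).lt_iff_gt (Set.mem_Ioi.mpr hr) (Set.mem_Ioi.mpr (hy n))).mp
      (by show _ < _; linarith [heq n])

lemma aux_lo {A C : ℝ} (hA : 0 < A) (hC : 0 < C)
    (p : ℕ → ℝ) (hp0 : ∀ n, p n ≠ 0) (hp : Tendsto p atTop (nhds 0))
    (y : ℕ → ℝ) (hy : ∀ n, 1 < y n)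
    (heq : ∀ n, (y n + 1) ^ p n - (y n - 1) ^ p n = C ^ p n - A ^ p n)
    {r : ℝ} (hr : 1 < r)
    (hL : 0 < Real.log (r+1) - Real.log (r-1) - Real.log C + Real.log A) :
    ∀ᶠ n in atTop, r < y n := by
  have hp' : Tendsto p atTop (nhdsWithin 0 {0}ᶜ) :=
    tendsto_nhdsWithin_iff.mpr ⟨hp, Eventually.of_forall hp0⟩
  have h1 := (philim hA hC hr).comp hp'
  have h2 : ∀ᶠ n in atTop,
      0 < ((r+1) ^ p n - (r-1) ^ p n - C ^ p n + A ^ p n) / p n :=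
    h1.eventually_const_lt hL
  have h3 : ∀ᶠ n in atTop, |p n| < 1 := by
    have := hp.eventually (eventually_abs_sub_lt 0 one_pos)
    simpa using this
  filter_upwards [h2, h3] with n hn2 hn3
  have hq1 : p n < 1 := (abs_lt.mp hn3).2
  rcases (hp0 n).lt_or_gt with hneg | hpos
  · have hΦ : (r+1) ^ p n - (r-1) ^ p n - C ^ p n + A ^ p n < 0 := by
      rcases div_pos_iff.mp hn2 with ⟨_, h⟩ | ⟨h, _⟩ <;> linarith
    exact ((gmono hneg).lt_iff_lt (Set.mem_Ioi.mpr hr) (Set.mem_Ioi.mpr (hy n))).mp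
      (by show _ < _; linarith [heq n])
  · have hΦ : 0 < (r+1) ^ p n - (r-1) ^ p n - C ^ p n + A ^ p n := by
      rcases div_pos_iff.mp hn2 with ⟨h, _⟩ | ⟨_, h⟩ <;> linarith
    exact ((ganti hpos hq1).lt_iff_gt (Set.mem_Ioi.mpr (hy n)) (Set.mem_Ioi.mpr hr)).mp
      (by show _ < _; linarith [heq n])

/-- cell S₁: bisector points above `y = 1` over a fixed `x < −u`
converge to the line point `s(x) = −x/u` as `p → 0`. -/
theorem stmt8 (u x : ℝ) (hu : 1 ≤ u) (hx : x < -u)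
    (p : ℕ → ℝ) (hp0 : ∀ n, p n ≠ 0) (hp : Tendsto p atTop (nhds 0))
    (y : ℕ → ℝ) (hy : ∀ n, 1 < y n)
    (hbis : ∀ n, |x + u| ^ (p n) + |y n + 1| ^ (p n)
                 = |x - u| ^ (p n) + |y n - 1| ^ (p n)) :
    Tendsto y atTop (nhds (-x / u)) := by
  have hu0 : 0 < u := by linarith
  have hA : 0 < -x - u := by linarith
  have hC : 0 < u - x := by linarith
  have hs1 : 1 < -x / u := by
    rw [lt_div_iff₀ hu0]; linarith
  have heq : ∀ n, (y n + 1) ^ p n - (y n - 1) ^ p n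
      = (u - x) ^ p n - (-x - u) ^ p n := by
    intro n
    have h := hbis n
    rw [show |x + u| = -x - u by rw [abs_of_neg (by linarith : x + u < 0)]; ring,
        show |x - u| = u - x by rw [abs_of_neg (by linarith : x - u < 0)]; ring,
        abs_of_pos (by linarith [hy n] : (0:ℝ) < y n + 1),
        abs_of_pos (by linarith [hy n] : (0:ℝ) < y n - 1)] at h
    linarith
  rw [tendsto_order]
  constructor
  · intro b hb
    set r : ℝ := max b ((1 + -x / u) / 2) with hrdef
    have hr1 : 1 < r := lt_max_of_lt_right (by linarith)
    have hrs : r < -x / u := max_lt hb (by linarith)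
    have hL : 0 < Real.log (r + 1) - Real.log (r - 1)
        - Real.log (u - x) + Real.log (-x - u) := by
      have hru : r * u < -x := (lt_div_iff₀ hu0).mp hrs
      have key : (u - x) * (r - 1) < (r + 1) * (-x - u) := by nlinarith
      have hlog : Real.log ((u - x)/(-x - u)) < Real.log ((r + 1)/(r - 1)) :=
        Real.log_lt_log (div_pos hC hA)
          ((div_lt_div_iff₀ hA (by linarith)).mpr key)
      rw [Real.log_div hC.ne' hA.ne',
          Real.log_div (by linarith : (0:ℝ) < r + 1).ne'
            (by linarith : (0:ℝ) < r - 1).ne'] at hlog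
      linarith
    filter_upwards [aux_lo hA hC p hp0 hp y hy heq hr1 hL] with n hn
    exact lt_of_le_of_lt (le_max_left _ _) hn
  · intro b hb
    have hb1 : 1 < b := lt_trans hs1 hb
    have hL : Real.log (b + 1) - Real.log (b - 1)
        - Real.log (u - x) + Real.log (-x - u) < 0 := by
      have hru : -x < b * u := (div_lt_iff₀ hu0).mp hb
      have key : (b + 1) * (-x - u) < (u - x) * (b - 1) := by nlinarith
      have hlog : Real.log ((b + 1)/(b - 1)) < Real.log ((u - x)/(-x - u)) :=
        Real.log_lt_log (div_pos (by linarith) (by linarith))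
          ((div_lt_div_iff₀ (by linarith) hA).mpr key)
      rw [Real.log_div (by linarith : (0:ℝ) < b + 1).ne'
            (by linarith : (0:ℝ) < b - 1).ne',
          Real.log_div hC.ne' hA.ne'] at hlog
      linarith
    exact aux_up hA hC p hp0 hp y hy heq hb1 hL
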